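/- arXiv:1405.6045 — 2 statements merged into one kernel-verified Lean document; each statement's English description precedes it below -/
import Mathlib

section
/- Let 0 ≤ α < n, let x ∈ ℝⁿ, r > 0, let f be locally integrable on ℝⁿ, and set f₂ = f·χ_{ℝⁿ∖B(x,2r)}. Then for every y ∈ B(x,r), M_α f₂(y) ≤ 2^{n−α} · sup_{t>2r} |B(x,t)|^{α/n − 1} ∫_{B(x,t)} |f(z)| dz. -/
open MeasureTheory Metric Set NNReal ENNReal Filter

noncomputable section

/-- A Young function: a convex, left-continuous `Φ : [0,∞) → [0,∞]` with `Φ(0) = 0`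
and `Φ(r) → ∞` as `r → ∞`. -/
structure YoungFunction where
  toFun : ℝ≥0 → ℝ≥0∞
  map_zero' : toFun 0 = 0
  convex' : ∀ (s t a b : ℝ≥0), a + b = 1 →
    toFun (a * s + b * t) ≤ (a : ℝ≥0∞) * toFun s + (b : ℝ≥0∞) * toFun t
  left_continuous' : ∀ s : ℝ≥0, 0 < s → toFun s = ⨆ (t : ℝ≥0) (_ : t < s), toFun t
  tendsto_top' : Tendsto toFun atTop (nhds (⊤ : ℝ≥0∞))

namespace YoungFunction

/-- The generalized inverse `Φ⁻¹(s) = inf {r ≥ 0 : Φ(r) > s}` (with `inf ∅ = ∞`). -/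
def inv (Φ : YoungFunction) (s : ℝ≥0∞) : ℝ≥0∞ :=
  sInf ((fun r : ℝ≥0 => (r : ℝ≥0∞)) '' {r : ℝ≥0 | s < Φ.toFun r})

/-- The canonical extension of `Φ` to `[0,∞]`. -/
def ext (Φ : YoungFunction) (s : ℝ≥0∞) : ℝ≥0∞ :=
  if s = ⊤ then ⊤ else Φ.toFun s.toNNReal

/-- `Φ` is of lower type `p`: `Φ(st) ≤ C t^p Φ(s)` for all `t ∈ [0,1]`, `s ≥ 0`. -/
def IsLowerType (Φ : YoungFunction) (p : ℝ) : Prop :=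
  ∃ C : ℝ, 0 < C ∧ ∀ (s t : ℝ≥0), t ≤ 1 →
    Φ.toFun (s * t) ≤ ENNReal.ofReal C * (t : ℝ≥0∞) ^ p * Φ.toFun s

/-- `Φ` is of upper type `p`: `Φ(st) ≤ C t^p Φ(s)` for all `t ≥ 1`, `s ≥ 0`. -/
def IsUpperType (Φ : YoungFunction) (p : ℝ) : Prop :=
  ∃ C : ℝ, 0 < C ∧ ∀ (s t : ℝ≥0), 1 ≤ t →
    Φ.toFun (s * t) ≤ ENNReal.ofReal C * (t : ℝ≥0∞) ^ p * Φ.toFun s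

end YoungFunction

variable {X : Type*} [MeasurableSpace X]

/-- The Luxemburg norm `‖g‖_{L_Φ(E)}` of an `[0,∞]`-valued function `g` on a set `E`. -/
def luxNormE (Φ : YoungFunction) (μ : Measure X) (E : Set X) (g : X → ℝ≥0∞) : ℝ≥0∞ :=
  sInf {lam : ℝ≥0∞ | 0 < lam ∧ ∫⁻ x in E, Φ.ext (g x / lam) ∂μ ≤ 1}

/-- The Luxemburg norm `‖f‖_{L_Φ(E)}` of a real-valued function `f` on a set `E`. -/
def luxNorm (Φ : YoungFunction) (μ : Measure X) (E : Set X) (f : X → ℝ) : ℝ≥0∞ :=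
  luxNormE Φ μ E fun x => (‖f x‖₊ : ℝ≥0∞)

/-- The weak Luxemburg norm `‖g‖_{WL_Φ(E)}`. -/
def wLuxNormE (Φ : YoungFunction) (μ : Measure X) (E : Set X) (g : X → ℝ≥0∞) : ℝ≥0∞ :=
  sInf {lam : ℝ≥0∞ | 0 < lam ∧
    ∀ t : ℝ≥0, 0 < t → Φ.toFun t * μ {x | x ∈ E ∧ (t : ℝ≥0∞) < g x / lam} ≤ 1}

/-- The weak Luxemburg norm of a real-valued function. -/
def wLuxNorm (Φ : YoungFunction) (μ : Measure X) (E : Set X) (f : X → ℝ) : ℝ≥0∞ :=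
  wLuxNormE Φ μ E fun x => (‖f x‖₊ : ℝ≥0∞)

/-- Euclidean space `ℝⁿ` with Lebesgue measure. -/
abbrev En (n : ℕ) := EuclideanSpace ℝ (Fin n)

/-- The fractional maximal operator
`M_α f(x) = sup_{t>0} |B(x,t)|^{α/n - 1} ∫_{B(x,t)} |f(y)| dy`. -/
def fracMaximal (n : ℕ) (α : ℝ) (f : En n → ℝ) (x : En n) : ℝ≥0∞ :=
  ⨆ (t : ℝ) (_ : 0 < t),
    volume (ball x t) ^ (α / (n : ℝ) - 1) * ∫⁻ y in ball x t, (‖f y‖₊ : ℝ≥0∞)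

/-- The commutator of the fractional maximal operator
`M_{b,α} f(x) = sup_{t>0} |B(x,t)|^{α/n - 1} ∫_{B(x,t)} |b(x)-b(y)||f(y)| dy`. -/
def commFracMaximal (n : ℕ) (α : ℝ) (b f : En n → ℝ) (x : En n) : ℝ≥0∞ :=
  ⨆ (t : ℝ) (_ : 0 < t),
    volume (ball x t) ^ (α / (n : ℝ) - 1) *
      ∫⁻ y in ball x t, (‖b x - b y‖₊ : ℝ≥0∞) * (‖f y‖₊ : ℝ≥0∞)

/-- The Hardy–Littlewood maximal operator. -/
def hlMaximal (n : ℕ) (f : En n → ℝ) (x : En n) : ℝ≥0∞ :=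
  ⨆ (t : ℝ) (_ : 0 < t),
    (volume (ball x t))⁻¹ * ∫⁻ y in ball x t, (‖f y‖₊ : ℝ≥0∞)

/-- The commutator of the Hardy–Littlewood maximal operator. -/
def commMaximal (n : ℕ) (b f : En n → ℝ) (x : En n) : ℝ≥0∞ :=
  ⨆ (t : ℝ) (_ : 0 < t),
    (volume (ball x t))⁻¹ * ∫⁻ y in ball x t, (‖b x - b y‖₊ : ℝ≥0∞) * (‖f y‖₊ : ℝ≥0∞)

/-- The generalized Orlicz–Morrey norm `‖g‖_{M_{Φ,φ}}` (for `[0,∞]`-valued functions). -/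
def morreyNormE (n : ℕ) (Φ : YoungFunction) (φ : En n → ℝ → ℝ) (g : En n → ℝ≥0∞) : ℝ≥0∞ :=
  ⨆ (x : En n) (r : ℝ) (_ : 0 < r),
    (ENNReal.ofReal (φ x r))⁻¹ * Φ.inv (ENNReal.ofReal r ^ (-(n : ℝ))) *
      luxNormE Φ volume (ball x r) g

/-- The generalized Orlicz–Morrey norm of a real-valued function. -/
def morreyNorm (n : ℕ) (Φ : YoungFunction) (φ : En n → ℝ → ℝ) (f : En n → ℝ) : ℝ≥0∞ :=
  morreyNormE n Φ φ fun x => (‖f x‖₊ : ℝ≥0∞)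

/-- The weak generalized Orlicz–Morrey norm `‖g‖_{WM_{Φ,φ}}`. -/
def wMorreyNormE (n : ℕ) (Φ : YoungFunction) (φ : En n → ℝ → ℝ) (g : En n → ℝ≥0∞) : ℝ≥0∞ :=
  ⨆ (x : En n) (r : ℝ) (_ : 0 < r),
    (ENNReal.ofReal (φ x r))⁻¹ * Φ.inv (ENNReal.ofReal r ^ (-(n : ℝ))) *
      wLuxNormE Φ volume (ball x r) g

/-- The Orlicz–Morrey norm `‖g‖_{M_{Φ,λ}}` with exponent `λ`. -/
def morreyLamNormE (n : ℕ) (Φ : YoungFunction) (lam : ℝ) (g : En n → ℝ≥0∞) : ℝ≥0∞ :=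
  ⨆ (x : En n) (r : ℝ) (_ : 0 < r),
    Φ.inv (ENNReal.ofReal r ^ (-lam)) * luxNormE Φ volume (ball x r) g

/-- The Orlicz–Morrey norm with exponent `λ` of a real-valued function. -/
def morreyLamNorm (n : ℕ) (Φ : YoungFunction) (lam : ℝ) (f : En n → ℝ) : ℝ≥0∞ :=
  morreyLamNormE n Φ lam fun x => (‖f x‖₊ : ℝ≥0∞)

/-- The average `f_{B(x,r)}` of `f` over the ball `B(x,r)`. -/
def ballAvg (n : ℕ) (b : En n → ℝ) (x : En n) (r : ℝ) : ℝ :=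
  ⨍ y in ball x r, b y

/-- The BMO seminorm `‖b‖_*`. -/
def bmoSeminorm (n : ℕ) (b : En n → ℝ) : ℝ≥0∞ :=
  ⨆ (x : En n) (r : ℝ) (_ : 0 < r),
    ENNReal.ofReal (⨍ y in ball x r, |b y - ballAvg n b x r|)
/-- Pointwise estimate for the fractional maximal operator applied to
`f₂ = f·χ_{ℝⁿ∖B(x,2r)}` on the ball `B(x,r)`. -/
theorem fracMaximal_indicator_compl_le
    (n : ℕ) (α : ℝ) (hα0 : 0 ≤ α) (hαn : α < n)
    (x : En n) (r : ℝ) (hr : 0 < r)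
    (f : En n → ℝ) (hf : LocallyIntegrable f volume)
    (y : En n) (hy : y ∈ ball x r) :
    fracMaximal n α (((ball x (2 * r))ᶜ).indicator f) y ≤
      (2 : ℝ≥0∞) ^ ((n : ℝ) - α) *
        ⨆ (t : ℝ) (_ : 2 * r < t),
          volume (ball x t) ^ (α / (n : ℝ) - 1) *
            ∫⁻ z in ball x t, (‖f z‖₊ : ℝ≥0∞) := by
  have hn : 0 < (n : ℝ) := lt_of_le_of_lt hα0 hαn
  have hnn : 0 < n := by exact_mod_cast hn
  rw [fracMaximal]
  refine iSup₂_le fun t ht => ?_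
  rcases le_or_gt t r with htr | htr
  · -- small radii: the integral vanishes
    have hz : ∫⁻ z in ball y t, (‖((ball x (2 * r))ᶜ).indicator f z‖₊ : ℝ≥0∞) = 0 := by
      rw [setLIntegral_congr_fun_ae measurableSet_ball
        (ae_of_all _ (fun z hz => ?_)), lintegral_zero]
      have hzx : z ∈ ball x (2 * r) := by
        rw [mem_ball] at *
        calc dist z x ≤ dist z y + dist y x := dist_triangle z y x
        _ < t + r := by exact add_lt_add hz hy
        _ ≤ 2 * r := by linarith
      have h0 : ((ball x (2 * r))ᶜ).indicator f z = 0 :=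
        Set.indicator_of_notMem (Set.notMem_compl_iff.mpr hzx) f
      simp [h0]
    rw [hz, mul_zero]
    exact zero_le
  · -- large radii
    set e : ℝ := α / (n : ℝ) - 1 with he
    have hen : (n : ℝ) * e = α - n := by rw [he, mul_sub, mul_one, mul_div_cancel₀ α hn.ne']
    have hb1 : volume (ball y t) = ENNReal.ofReal (t ^ n) * volume (ball (0 : En n) 1) := by
      simpa [finrank_euclideanSpace_fin] using
        Measure.addHaar_ball_of_pos (volume : Measure (En n)) y (hr.trans htr)
    have hb2 : volume (ball x (2 * t)) =
        ENNReal.ofReal ((2 * t) ^ n) * volume (ball (0 : En n) 1) := by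
      simpa [finrank_euclideanSpace_fin] using
        Measure.addHaar_ball_of_pos (volume : Measure (En n)) x
          (by linarith : (0:ℝ) < 2 * t)
    have hc0 : volume (ball (0 : En n) 1) ≠ 0 :=
      (measure_ball_pos _ _ one_pos).ne'
    have hct : volume (ball (0 : En n) 1) ≠ ⊤ := measure_ball_lt_top.ne
    have htpos : (0:ℝ) < t := hr.trans htr
    -- key volume rpow inequality
    have hkey : volume (ball y t) ^ e =
        (2 : ℝ≥0∞) ^ ((n : ℝ) - α) * volume (ball x (2 * t)) ^ e := by
      rw [hb1, hb2]
      have h2t : ((2 * t) ^ n : ℝ) = 2 ^ n * t ^ n := by ring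
      have hA0 : ENNReal.ofReal (t ^ n) ≠ 0 :=
        (ENNReal.ofReal_pos.mpr (by positivity)).ne'
      have hB0 : ENNReal.ofReal ((2:ℝ) ^ n) ≠ 0 :=
        (ENNReal.ofReal_pos.mpr (by positivity)).ne'
      have hAV0 : ENNReal.ofReal (t ^ n) * volume (ball (0 : En n) 1) ≠ 0 :=
        mul_ne_zero hA0 hc0
      rw [h2t, ENNReal.ofReal_mul (by positivity), mul_assoc,
        ENNReal.mul_rpow_of_ne_zero hB0 hAV0]
      have h2 : (ENNReal.ofReal ((2:ℝ) ^ n)) ^ e = (2 : ℝ≥0∞) ^ ((α : ℝ) - n) := by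
        rw [show (ENNReal.ofReal ((2:ℝ) ^ n)) = (2 : ℝ≥0∞) ^ (n : ℝ) by
            rw [show ((2:ℝ) ^ n) = (2:ℝ) ^ (n : ℝ) by rw [Real.rpow_natCast],
              ← ENNReal.ofReal_rpow_of_pos two_pos]
            norm_num,
          ← ENNReal.rpow_mul, hen]
      rw [h2, ← mul_assoc, ← ENNReal.rpow_add _ _ (by norm_num) (by norm_num)]
      norm_num
    -- integral inequality
    have hsub : ball y t ⊆ ball x (2 * t) := by
      intro z hz
      rw [mem_ball] at *
      calc dist z x ≤ dist z y + dist y x := dist_triangle z y x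
      _ < t + r := add_lt_add hz hy
      _ ≤ 2 * t := by linarith
    have hint : (∫⁻ z in ball y t, (‖((ball x (2 * r))ᶜ).indicator f z‖₊ : ℝ≥0∞)) ≤
        ∫⁻ z in ball x (2 * t), (‖f z‖₊ : ℝ≥0∞) := by
      refine le_trans (lintegral_mono fun z => ?_) (lintegral_mono_set hsub)
      refine ENNReal.coe_le_coe.mpr ?_
      rw [← NNReal.coe_le_coe, coe_nnnorm, coe_nnnorm]
      exact norm_indicator_le_norm_self f z
    calc volume (ball y t) ^ e * ∫⁻ z in ball y t,
          (‖((ball x (2 * r))ᶜ).indicator f z‖₊ : ℝ≥0∞)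
        ≤ ((2 : ℝ≥0∞) ^ ((n : ℝ) - α) * volume (ball x (2 * t)) ^ e) *
          ∫⁻ z in ball x (2 * t), (‖f z‖₊ : ℝ≥0∞) := by
          rw [hkey]; exact mul_le_mul_right hint _
      _ = (2 : ℝ≥0∞) ^ ((n : ℝ) - α) * (volume (ball x (2 * t)) ^ e *
          ∫⁻ z in ball x (2 * t), (‖f z‖₊ : ℝ≥0∞)) := by ring
      _ ≤ _ := by
          refine mul_le_mul_right ?_ _
          exact le_iSup₂_of_le (2 * t) (by linarith) le_rfl

end
end

section
/- Let 0 ≤ α < n and let Φ, Ψ be Young functions such that the fractional maximal operator M_α is bounded from L_Φ(ℝⁿ) to L_Ψ(ℝⁿ), i.e. there is A > 0 with ‖M_α g‖_{L_Ψ(ℝⁿ)} ≤ A‖g‖_{L_Φ(ℝⁿ)} for all g (by Cianchi's theorem this is equivalent to the condition ∫₀¹ Ψ(t)/t^{1+n/(n−α)} dt < ∞ together with Φ dominating Ψ_{n/α} globally). Then there exists C > 0, independent of x, r and f, such that for every ball B = B(x,r) and every locally integrable f: ‖M_α f‖_{L_Ψ(B(x,r))} ≤ C ( ‖f‖_{L_Φ(B(x,2r))}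 + Ψ⁻¹(r⁻ⁿ)⁻¹ · sup_{t>2r} t^{α−n} ∫_{B(x,t)} |f(z)| dz ). -/
open MeasureTheory Metric Set NNReal ENNReal Filter

noncomputable section

variable {X : Type*} [MeasurableSpace X]

section Helpers

namespace YoungFunction

variable (Φ : YoungFunction)

lemma toFun_mono : Monotone Φ.toFun := by
  intro s t hst
  rcases eq_or_ne t 0 with rfl | ht
  · simp [le_antisymm hst zero_le]
  · have ha : s / t ≤ 1 := div_le_one_of_le₀ hst zero_le
    have hsum : s / t + (1 - s / t) = 1 := add_tsub_cancel_of_le ha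
    have h := Φ.convex' t 0 (s / t) (1 - s / t) hsum
    have hst' : (s / t) * t = s := div_mul_cancel₀ s ht
    rw [mul_zero, add_zero, hst', Φ.map_zero', mul_zero, add_zero] at h
    calc Φ.toFun s ≤ ((s / t : ℝ≥0) : ℝ≥0∞) * Φ.toFun t := h
    _ ≤ 1 * Φ.toFun t := by
        gcongr
        exact_mod_cast ha
    _ = Φ.toFun t := one_mul _

lemma toFun_half_le (u : ℝ≥0) : Φ.toFun (2⁻¹ * u) ≤ 2⁻¹ * Φ.toFun u := by
  have hsum : (2⁻¹ : ℝ≥0) + 2⁻¹ = 1 := by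
    rw [← two_mul, mul_inv_cancel₀ two_ne_zero]
  have h := Φ.convex' u 0 2⁻¹ 2⁻¹ hsum
  rw [mul_zero, add_zero, Φ.map_zero', mul_zero, add_zero] at h
  refine h.trans_eq ?_
  congr 1
  rw [ENNReal.coe_inv two_ne_zero, ENNReal.coe_ofNat]

lemma toFun_smul_ge (a u : ℝ≥0) (ha : 1 ≤ a) :
    (a : ℝ≥0∞) * Φ.toFun u ≤ Φ.toFun (a * u) := by
  have ha0 : a ≠ 0 := by positivity
  have hsum : a⁻¹ + (1 - a⁻¹) = 1 := add_tsub_cancel_of_le (inv_le_one_of_one_le₀ ha)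
  have h := Φ.convex' (a * u) 0 a⁻¹ (1 - a⁻¹) hsum
  rw [mul_zero, add_zero, Φ.map_zero', mul_zero, add_zero,
    ← mul_assoc, inv_mul_cancel₀ ha0, one_mul] at h
  calc (a : ℝ≥0∞) * Φ.toFun u ≤ (a : ℝ≥0∞) * (((a⁻¹ : ℝ≥0) : ℝ≥0∞) * Φ.toFun (a * u)) := by
        gcongr
  _ = Φ.toFun (a * u) := by
      rw [← mul_assoc, ENNReal.coe_inv ha0, ENNReal.mul_inv_cancel (by exact_mod_cast ha0)
        ENNReal.coe_ne_top, one_mul]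

lemma ext_zero : Φ.ext 0 = 0 := by simp [YoungFunction.ext, Φ.map_zero']

lemma ext_coe (u : ℝ≥0) : Φ.ext u = Φ.toFun u := by simp [YoungFunction.ext]

lemma ext_mono : Monotone Φ.ext := by
  intro u v huv
  rcases eq_or_ne v ⊤ with rfl | hv
  · simp [YoungFunction.ext]
  · have hu : u ≠ ⊤ := fun h => hv (top_le_iff.mp (h ▸ huv))
    simp only [YoungFunction.ext, hu, hv, if_false]
    exact Φ.toFun_mono (ENNReal.toNNReal_mono hv huv)

lemma ext_half_le (u : ℝ≥0∞) : Φ.ext (2⁻¹ * u) ≤ 2⁻¹ * Φ.ext u := by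
  rcases eq_or_ne u ⊤ with rfl | hu
  · simp [YoungFunction.ext]
  · lift u to ℝ≥0 using hu
    have h2 : ((2⁻¹ : ℝ≥0) : ℝ≥0∞) = 2⁻¹ := by
      rw [ENNReal.coe_inv two_ne_zero, ENNReal.coe_ofNat]
    have h3 : (2⁻¹ : ℝ≥0∞) * ↑u = ((2⁻¹ * u : ℝ≥0) : ℝ≥0∞) := by
      rw [ENNReal.coe_mul, h2]
    rw [h3, ext_coe, ext_coe]
    exact Φ.toFun_half_le u

/-- If `u < Φ.inv s` then `Φ.ext u ≤ s`. -/
lemma ext_le_of_lt_inv {u s : ℝ≥0∞} (h : u < Φ.inv s) : Φ.ext u ≤ s := by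
  have hu : u ≠ ⊤ := (h.trans_le le_top).ne
  rw [YoungFunction.ext, if_neg hu]
  by_contra hc
  push_neg at hc
  have : Φ.inv s ≤ u := by
    refine sInf_le ⟨u.toNNReal, hc, ?_⟩
    simp [ENNReal.coe_toNNReal hu]
  exact absurd h (not_lt.mpr this)

lemma inv_mono : Monotone Φ.inv := by
  intro s t hst
  apply sInf_le_sInf
  exact Set.image_mono (fun r hr => lt_of_le_of_lt hst hr)

lemma inv_lt_top {s : ℝ≥0∞} (hs : s ≠ ⊤) : Φ.inv s < ⊤ := by
  have hev : ∀ᶠ r in atTop, s < Φ.toFun r :=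
    Φ.tendsto_top' (Ioi_mem_nhds hs.lt_top)
  obtain ⟨r, hr⟩ := hev.exists
  calc Φ.inv s ≤ (r : ℝ≥0∞) := sInf_le ⟨r, hr, rfl⟩
  _ < ⊤ := ENNReal.coe_lt_top

lemma inv_mul_le (a : ℝ≥0) (ha : 1 ≤ a) (s : ℝ≥0∞) :
    Φ.inv ((a : ℝ≥0∞) * s) ≤ (a : ℝ≥0∞) * Φ.inv s := by
  have ha0 : (a : ℝ≥0∞) ≠ 0 := by
    exact_mod_cast (one_pos.trans_le ha).ne'
  conv_rhs => rw [YoungFunction.inv, sInf_image', ENNReal.mul_iInf_of_ne ha0 ENNReal.coe_ne_top]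
  refine le_iInf fun r => ?_
  have hr : s < Φ.toFun r := r.2
  have h1 : (a : ℝ≥0∞) * s < (a : ℝ≥0∞) * Φ.toFun r :=
    (ENNReal.mul_lt_mul_iff_right ha0 ENNReal.coe_ne_top).mpr hr
  have h2 : (a : ℝ≥0∞) * s < Φ.toFun (a * r.1) :=
    h1.trans_le (Φ.toFun_smul_ge a r.1 ha)
  calc Φ.inv ((a : ℝ≥0∞) * s) ≤ ((a * r.1 : ℝ≥0) : ℝ≥0∞) := sInf_le ⟨a * r.1, h2, rfl⟩
  _ = (a : ℝ≥0∞) * (r.1 : ℝ≥0∞) := by push_cast; ring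

end YoungFunction

end Helpers


section LuxLemmas

variable {X : Type*} [MeasurableSpace X]

lemma top_mem_luxSet (Φ : YoungFunction) (μ : Measure X) (E : Set X) (g : X → ℝ≥0∞) :
    (⊤ : ℝ≥0∞) ∈ {lam : ℝ≥0∞ | 0 < lam ∧ ∫⁻ x in E, Φ.ext (g x / lam) ∂μ ≤ 1} := by
  refine ⟨by simp, ?_⟩
  simp [ENNReal.div_top, Φ.ext_zero]

lemma luxNormE_mono_fun (Φ : YoungFunction) (μ : Measure X) {E : Set X}
    (hE : MeasurableSet E) {g h : X → ℝ≥0∞} (hgh : ∀ x ∈ E, g x ≤ h x) :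
    luxNormE Φ μ E g ≤ luxNormE Φ μ E h := by
  apply sInf_le_sInf
  rintro lam ⟨h0, h1⟩
  refine ⟨h0, le_trans ?_ h1⟩
  refine lintegral_mono_ae ?_
  filter_upwards [ae_restrict_of_forall_mem hE hgh] with x hx
  exact Φ.ext_mono (ENNReal.div_le_div_right hx lam)

lemma luxNormE_mono_set (Φ : YoungFunction) (μ : Measure X) {E F : Set X}
    (hEF : E ⊆ F) (g : X → ℝ≥0∞) :
    luxNormE Φ μ E g ≤ luxNormE Φ μ F g := by
  apply sInf_le_sInf
  rintro lam ⟨h0, h1⟩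
  exact ⟨h0, le_trans (lintegral_mono' (Measure.restrict_mono hEF le_rfl) le_rfl) h1⟩

private lemma le_add_four_sInf {P c : ℝ≥0∞} {S : Set ℝ≥0∞} (h : ∀ l ∈ S, P ≤ c + 4 * l) :
    P ≤ c + 4 * sInf S := by
  refine ENNReal.le_of_forall_pos_le_add fun ε hε hlt => ?_
  have hS : sInf S ≠ ⊤ := by
    intro htop
    rw [htop] at hlt
    simp at hlt
  have h4 : sInf S < sInf S + (ε : ℝ≥0∞) / 4 := by
    refine ENNReal.lt_add_right hS ?_
    simp [ENNReal.div_eq_zero_iff, hε.ne']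
  obtain ⟨l, hl, hl'⟩ := sInf_lt_iff.mp h4
  calc P ≤ c + 4 * l := h l hl
  _ ≤ c + 4 * (sInf S + (ε : ℝ≥0∞) / 4) := by gcongr
  _ = c + 4 * sInf S + ε := by
      rw [mul_add, ENNReal.mul_div_cancel' (by norm_num) (by norm_num), add_assoc]

lemma luxNormE_add_const_le (Φ : YoungFunction) (μ : Measure X) (E : Set X)
    (g : X → ℝ≥0∞) (c : ℝ≥0∞) :
    luxNormE Φ μ E (fun x => g x + c) ≤
      4 * luxNormE Φ μ E g + 4 * luxNormE Φ μ E (fun _ => c) := by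
  have key : ∀ l1 ∈ {lam : ℝ≥0∞ | 0 < lam ∧ ∫⁻ x in E, Φ.ext (g x / lam) ∂μ ≤ 1},
      ∀ l2 ∈ {lam : ℝ≥0∞ | 0 < lam ∧ ∫⁻ x in E, Φ.ext (c / lam) ∂μ ≤ 1},
      luxNormE Φ μ E (fun x => g x + c) ≤ 4 * l1 + 4 * l2 := by
    rintro l1 ⟨h10, h11⟩ l2 ⟨h20, h21⟩
    set m := max l1 l2 with hm
    have hm0 : 0 < m := lt_max_of_lt_left h10
    have hstep : ∀ x : X, Φ.ext ((g x + c) / (4 * m)) ≤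
        2⁻¹ * (Φ.ext (g x / l1) + Φ.ext (c / l2)) := by
      intro x
      have e1 : (g x + c) / (4 * m) = 2⁻¹ * ((g x + c) / (2 * m)) := by
        rw [div_eq_mul_inv, div_eq_mul_inv,
          show (4 : ℝ≥0∞) * m = 2 * (2 * m) by ring,
          ENNReal.mul_inv (Or.inl (by norm_num)) (Or.inl (by norm_num))]
        ring
      have e2 : (g x + c) / (2 * m) ≤ max (g x / l1) (c / l2) := by
        calc (g x + c) / (2 * m) ≤ (2 * max (g x) c) / (2 * m) := by
              refine ENNReal.div_le_div ?_ le_rfl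
              rw [two_mul]
              exact add_le_add (le_max_left _ _) (le_max_right _ _)
        _ = max (g x) c / m := by
              rw [ENNReal.mul_div_mul_left _ _ (by norm_num) (by norm_num)]
        _ ≤ max (g x / l1) (c / l2) := by
              rcases max_cases (g x) c with ⟨he, _⟩ | ⟨he, _⟩
              · rw [he]
                exact le_max_of_le_left (ENNReal.div_le_div le_rfl (le_max_left _ _))
              · rw [he]
                exact le_max_of_le_right (ENNReal.div_le_div le_rfl (le_max_right _ _))
      have e3 : Φ.ext (max (g x / l1) (c / l2)) ≤ Φ.ext (g x / l1) + Φ.ext (c / l2) := by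
        rcases max_cases (g x / l1) (c / l2) with ⟨he, _⟩ | ⟨he, _⟩
        · rw [he]; exact le_add_of_nonneg_right zero_le
        · rw [he]; exact le_add_of_nonneg_left zero_le
      calc Φ.ext ((g x + c) / (4 * m)) = Φ.ext (2⁻¹ * ((g x + c) / (2 * m))) := by rw [e1]
      _ ≤ 2⁻¹ * Φ.ext ((g x + c) / (2 * m)) := Φ.ext_half_le _
      _ ≤ 2⁻¹ * Φ.ext (max (g x / l1) (c / l2)) := by gcongr; exact Φ.ext_mono e2
      _ ≤ 2⁻¹ * (Φ.ext (g x / l1) + Φ.ext (c / l2)) := by gcongr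
    have hadm : ∫⁻ x in E, Φ.ext ((g x + c) / (4 * m)) ∂μ ≤ 1 := by
      calc ∫⁻ x in E, Φ.ext ((g x + c) / (4 * m)) ∂μ
          ≤ ∫⁻ x in E, 2⁻¹ * (Φ.ext (g x / l1) + Φ.ext (c / l2)) ∂μ :=
            lintegral_mono hstep
      _ = 2⁻¹ * ∫⁻ x in E, (Φ.ext (g x / l1) + Φ.ext (c / l2)) ∂μ :=
            lintegral_const_mul' _ _ (by norm_num)
      _ = 2⁻¹ * ((∫⁻ x in E, Φ.ext (g x / l1) ∂μ) + ∫⁻ x in E, Φ.ext (c / l2) ∂μ) := by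
            rw [lintegral_add_right' _ aemeasurable_const]
      _ ≤ 2⁻¹ * (1 + 1) := by gcongr
      _ = 1 := by
          rw [one_add_one_eq_two, ENNReal.inv_mul_cancel (by norm_num) (by norm_num)]
    have : luxNormE Φ μ E (fun x => g x + c) ≤ 4 * m :=
      sInf_le ⟨ENNReal.mul_pos (by norm_num) hm0.ne', hadm⟩
    refine this.trans ?_
    rcases max_cases l1 l2 with ⟨he, _⟩ | ⟨he, _⟩ <;> rw [hm, he]
    · exact le_add_of_nonneg_right zero_le
    · exact le_add_of_nonneg_left zero_le
  have step1 : ∀ l1 ∈ {lam : ℝ≥0∞ | 0 < lam ∧ ∫⁻ x in E, Φ.ext (g x / lam) ∂μ ≤ 1},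
      luxNormE Φ μ E (fun x => g x + c) ≤ 4 * l1 + 4 * luxNormE Φ μ E (fun _ => c) := by
    intro l1 h1
    exact le_add_four_sInf (fun l2 h2 => key l1 h1 l2 h2)
  have step2 : luxNormE Φ μ E (fun x => g x + c) ≤
      4 * luxNormE Φ μ E (fun _ => c) + 4 * luxNormE Φ μ E g :=
    le_add_four_sInf (fun l1 h1 => by rw [add_comm]; exact step1 l1 h1)
  rw [add_comm] at step2
  exact step2

lemma luxNormE_const_le (Ψ : YoungFunction) (μ : Measure X) (E : Set X)
    (hE0 : 0 < μ E) (hEtop : μ E ≠ ⊤) (c : ℝ≥0∞) :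
    luxNormE Ψ μ E (fun _ => c) ≤ 2 * c * (Ψ.inv ((μ E)⁻¹))⁻¹ := by
  rcases eq_or_ne c 0 with rfl | hc0
  · simp only [mul_zero, zero_mul]
    refine ENNReal.le_of_forall_pos_le_add fun ε hε _ => ?_
    rw [zero_add]
    refine sInf_le ⟨by exact_mod_cast hε, ?_⟩
    simp [ENNReal.zero_div, Ψ.ext_zero]
  set I := Ψ.inv ((μ E)⁻¹) with hI
  have hItop : I < ⊤ := Ψ.inv_lt_top (by simp [hE0.ne'])
  rcases eq_or_ne I 0 with hI0 | hI0
  · rw [hI0]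
    simp only [ENNReal.inv_zero]
    rw [ENNReal.mul_top (by simpa using hc0)]
    exact le_top
  rcases eq_or_ne c ⊤ with rfl | hctop
  · have htop : (2:ℝ≥0∞) * ⊤ * I⁻¹ = ⊤ := by
      rw [ENNReal.mul_top (by norm_num), ENNReal.top_mul (ENNReal.inv_ne_zero.mpr hItop.ne)]
    rw [htop]
    exact le_top
  -- main case
  have hlam0 : (0:ℝ≥0∞) < 2 * c * I⁻¹ := by
    apply ENNReal.mul_pos
    · simpa using hc0
    · simpa using hItop.ne
  have harg : c / (2 * c * I⁻¹) = 2⁻¹ * I := by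
    rw [div_eq_mul_inv, ENNReal.mul_inv (Or.inr (ENNReal.inv_ne_top.mpr hI0))
        (Or.inr (ENNReal.inv_ne_zero.mpr hItop.ne)),
      ENNReal.mul_inv (Or.inl (by norm_num)) (Or.inl (by norm_num)), inv_inv,
      ← mul_assoc]
    rw [show c * (2⁻¹ * c⁻¹) = 2⁻¹ * (c * c⁻¹) by ring, ENNReal.mul_inv_cancel hc0 hctop,
      mul_one]
  have hlt : 2⁻¹ * I < I := by
    apply ENNReal.mul_lt_of_lt_div
    rw [ENNReal.div_self hI0 hItop.ne]
    exact ENNReal.inv_lt_one.mpr one_lt_two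
  have hadm : ∫⁻ x in E, Ψ.ext (c / (2 * c * I⁻¹)) ∂μ ≤ 1 := by
    rw [setLIntegral_const, harg]
    calc Ψ.ext (2⁻¹ * I) * μ E ≤ (μ E)⁻¹ * μ E := by
          gcongr
          exact Ψ.ext_le_of_lt_inv hlt
    _ = 1 := ENNReal.inv_mul_cancel hE0.ne' hEtop
  exact sInf_le ⟨hlam0, hadm⟩

end LuxLemmas

/-- If `M_α` is bounded from `L_Φ(ℝⁿ)` to `L_Ψ(ℝⁿ)`, then the local
estimate `‖M_α f‖_{L_Ψ(B(x,r))} ≲ ‖f‖_{L_Φ(B(x,2r))} + Ψ⁻¹(r⁻ⁿ)⁻¹ sup_{t>2r} t^{α-n} ∫_{B(x,t)}|f|`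
holds. -/
theorem fracMaximal_local_strong_estimate
    (n : ℕ) (α : ℝ) (hα0 : 0 ≤ α) (hαn : α < n) (Φ Ψ : YoungFunction)
    (A : ℝ) (hA : 0 < A)
    (hbdd : ∀ g : En n → ℝ,
      luxNormE Ψ volume Set.univ (fracMaximal n α g) ≤
        ENNReal.ofReal A * luxNorm Φ volume Set.univ g) :
    ∃ C : ℝ, 0 < C ∧ ∀ (x : En n) (r : ℝ), 0 < r → ∀ f : En n → ℝ,
      LocallyIntegrable f volume →
      luxNormE Ψ volume (ball x r) (fracMaximal n α f) ≤
        ENNReal.ofReal C *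
          (luxNorm Φ volume (ball x (2 * r)) f +
            (Ψ.inv (ENNReal.ofReal r ^ (-(n : ℝ))))⁻¹ *
              ⨆ (t : ℝ) (_ : 2 * r < t),
                ENNReal.ofReal t ^ (α - (n : ℝ)) *
                  ∫⁻ z in ball x t, (‖f z‖₊ : ℝ≥0∞)) := by
  have hn : (0:ℝ) < n := hα0.trans_lt hαn
  have hnnat : 0 < n := by exact_mod_cast hn
  have hn0 : (n:ℝ) ≠ 0 := hn.ne'
  haveI : Nontrivial (En n) := by
    refine ⟨0, EuclideanSpace.single (⟨0, hnnat⟩ : Fin n) (1:ℝ), fun h => ?_⟩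
    have := congrFun (congrArg (fun g : En n => (g : Fin n → ℝ)) h) ⟨0, hnnat⟩
    simp at this
  set v : ℝ≥0∞ := volume (ball (0 : En n) 1) with hv
  have hv0 : v ≠ 0 := (measure_ball_pos volume 0 one_pos).ne'
  have hvt : v ≠ ⊤ := measure_ball_lt_top.ne
  have hvol : ∀ (y : En n) (t : ℝ), 0 ≤ t →
      volume (ball y t) = ENNReal.ofReal (t ^ n) * v := by
    intro y t ht
    rw [Measure.addHaar_ball volume y ht, finrank_euclideanSpace_fin]
  have hvolpow : ∀ (y : En n) (t : ℝ), 0 < t →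
      (volume (ball y t)) ^ (α / (n:ℝ) - 1) =
        ENNReal.ofReal t ^ (α - (n:ℝ)) * v ^ (α / (n:ℝ) - 1) := by
    intro y t ht
    rw [hvol y t ht.le, ENNReal.mul_rpow_of_ne_top ENNReal.ofReal_ne_top hvt]
    congr 1
    rw [← Real.rpow_natCast t n, ← ENNReal.ofReal_rpow_of_pos ht, ← ENNReal.rpow_mul]
    congr 1
    field_simp
  set c₂ : ℝ≥0∞ := v ^ (α / (n:ℝ) - 1) * (2:ℝ≥0∞) ^ ((n:ℝ) - α) with hc₂
  have hc₂t : c₂ ≠ ⊤ := by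
    apply ENNReal.mul_ne_top
    · intro h
      rcases ENNReal.rpow_eq_top_iff.mp h with ⟨h1, _⟩ | ⟨h1, _⟩
      · exact hv0 h1
      · exact hvt h1
    · intro h
      rcases ENNReal.rpow_eq_top_iff.mp h with ⟨h1, _⟩ | ⟨h1, _⟩
      · norm_num at h1
      · norm_num at h1
  set M : ℝ≥0∞ := max 1 v with hM
  have hM1 : 1 ≤ M := le_max_left _ _
  have hM0 : M ≠ 0 := (zero_lt_one.trans_le hM1).ne'
  have hMt : M ≠ ⊤ := by
    rw [hM]
    simp [hvt, lt_top_iff_ne_top]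
  set D : ℝ≥0∞ := max (ENNReal.ofReal (4 * A)) (8 * c₂ * M) with hD
  have hDt : D ≠ ⊤ := by
    rw [hD]
    refine (max_lt ENNReal.ofReal_lt_top ?_).ne
    exact ENNReal.mul_lt_top (ENNReal.mul_lt_top (by norm_num) hc₂t.lt_top) hMt.lt_top
  refine ⟨D.toReal + 1, by positivity, ?_⟩
  intro x r hr f hf
  have hCD : D ≤ ENNReal.ofReal (D.toReal + 1) := by
    calc D = ENNReal.ofReal D.toReal := (ENNReal.ofReal_toReal hDt).symm
    _ ≤ ENNReal.ofReal (D.toReal + 1) := ENNReal.ofReal_le_ofReal (by linarith)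
  set B2 := ball x (2 * r) with hB2
  set f₁ : En n → ℝ := B2.indicator f with hf₁
  set f₂ : En n → ℝ := B2ᶜ.indicator f with hf₂
  set K : ℝ≥0∞ := ⨆ (t : ℝ) (_ : 2 * r < t),
      ENNReal.ofReal t ^ (α - (n:ℝ)) * ∫⁻ z in ball x t, (‖f z‖₊ : ℝ≥0∞) with hK
  have hnorm : ∀ z, (‖f z‖₊ : ℝ≥0∞) = (‖f₁ z‖₊ : ℝ≥0∞) + (‖f₂ z‖₊ : ℝ≥0∞) := by
    intro z
    by_cases hz : z ∈ B2
    · simp [hf₁, hf₂, Set.indicator_of_mem hz,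
        Set.indicator_of_notMem (Set.notMem_compl_iff.mpr hz)]
    · simp [hf₁, hf₂, Set.indicator_of_notMem hz, Set.indicator_of_mem (Set.mem_compl hz)]
  -- splitting of the maximal function
  have hsplit : ∀ y : En n, fracMaximal n α f y ≤
      fracMaximal n α f₁ y + fracMaximal n α f₂ y := by
    intro y
    refine iSup₂_le fun t ht => ?_
    have hmeas1 : AEMeasurable (fun z => (‖f₁ z‖₊ : ℝ≥0∞)) (volume.restrict (ball y t)) :=
      ((hf.aestronglyMeasurable.indicator measurableSet_ball).restrict).enorm
    have hI : ∫⁻ z in ball y t, (‖f z‖₊ : ℝ≥0∞) =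
        (∫⁻ z in ball y t, (‖f₁ z‖₊ : ℝ≥0∞)) + ∫⁻ z in ball y t, (‖f₂ z‖₊ : ℝ≥0∞) := by
      rw [← lintegral_add_left' hmeas1]
      exact lintegral_congr fun z => hnorm z
    rw [hI, mul_add]
    refine add_le_add ?_ ?_
    · exact le_iSup₂ (f := fun t' (_ : 0 < t') => volume (ball y t') ^ (α / (n:ℝ) - 1) *
        ∫⁻ z in ball y t', (‖f₁ z‖₊ : ℝ≥0∞)) t ht
    · exact le_iSup₂ (f := fun t' (_ : 0 < t') => volume (ball y t') ^ (α / (n:ℝ) - 1) *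
        ∫⁻ z in ball y t', (‖f₂ z‖₊ : ℝ≥0∞)) t ht
  -- bound of the far part
  have hf2bound : ∀ y ∈ ball x r, fracMaximal n α f₂ y ≤ c₂ * K := by
    intro y hy
    rw [mem_ball] at hy
    refine iSup₂_le fun t ht => ?_
    by_cases htr : t ≤ r
    · have hzero : ∫⁻ z in ball y t, (‖f₂ z‖₊ : ℝ≥0∞) ≤ 0 := by
        have hpt : ∀ z ∈ ball y t, (‖f₂ z‖₊ : ℝ≥0∞) ≤ 0 := by
          intro z hz
          rw [mem_ball] at hz
          have hz2 : z ∈ B2 := by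
            rw [hB2, mem_ball]
            calc dist z x ≤ dist z y + dist y x := dist_triangle z y x
            _ < 2 * r := by linarith
          simp [hf₂, Set.indicator_of_notMem (Set.notMem_compl_iff.mpr hz2)]
        calc ∫⁻ z in ball y t, (‖f₂ z‖₊ : ℝ≥0∞) ≤ ∫⁻ _ in ball y t, 0 := by
              refine lintegral_mono_ae ?_
              filter_upwards [ae_restrict_of_forall_mem measurableSet_ball hpt] with z hz
              exact hz
        _ = 0 := lintegral_zero
      calc volume (ball y t) ^ (α / (n:ℝ) - 1) * ∫⁻ z in ball y t, (‖f₂ z‖₊ : ℝ≥0∞)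
          ≤ volume (ball y t) ^ (α / (n:ℝ) - 1) * 0 := by gcongr
      _ ≤ c₂ * K := by simp
    · push_neg at htr
      have hsub : ball y t ⊆ ball x (2 * t) := by
        intro z hz
        rw [mem_ball] at hz ⊢
        calc dist z x ≤ dist z y + dist y x := dist_triangle z y x
        _ < 2 * t := by linarith
      have hIle : ∫⁻ z in ball y t, (‖f₂ z‖₊ : ℝ≥0∞) ≤
          ∫⁻ z in ball x (2 * t), (‖f z‖₊ : ℝ≥0∞) := by
        refine le_trans (lintegral_mono' (Measure.restrict_mono hsub le_rfl) le_rfl) ?_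
        refine lintegral_mono fun z => ?_
        have : ‖f₂ z‖₊ ≤ ‖f z‖₊ := by
          by_cases hz : z ∈ B2ᶜ
          · simp [hf₂, Set.indicator_of_mem hz]
          · simp [hf₂, Set.indicator_of_notMem hz]
        exact ENNReal.coe_le_coe.mpr this
      have hrpow : ENNReal.ofReal t ^ (α - (n:ℝ)) =
          (2:ℝ≥0∞) ^ ((n:ℝ) - α) * ENNReal.ofReal (2 * t) ^ (α - (n:ℝ)) := by
        rw [ENNReal.ofReal_mul (by norm_num), ENNReal.ofReal_ofNat,
          ENNReal.mul_rpow_of_ne_top (by norm_num) ENNReal.ofReal_ne_top, ← mul_assoc,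
          ← ENNReal.rpow_add _ _ (by norm_num) (by norm_num)]
        norm_num
      calc volume (ball y t) ^ (α / (n:ℝ) - 1) * ∫⁻ z in ball y t, (‖f₂ z‖₊ : ℝ≥0∞)
          = ENNReal.ofReal t ^ (α - (n:ℝ)) * v ^ (α / (n:ℝ) - 1) *
            ∫⁻ z in ball y t, (‖f₂ z‖₊ : ℝ≥0∞) := by rw [hvolpow y t ht]
      _ ≤ ENNReal.ofReal t ^ (α - (n:ℝ)) * v ^ (α / (n:ℝ) - 1) *
            ∫⁻ z in ball x (2 * t), (‖f z‖₊ : ℝ≥0∞) := by gcongr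
      _ = c₂ * (ENNReal.ofReal (2 * t) ^ (α - (n:ℝ)) *
            ∫⁻ z in ball x (2 * t), (‖f z‖₊ : ℝ≥0∞)) := by
          rw [hrpow, hc₂]; ring
      _ ≤ c₂ * K := by
          gcongr
          exact le_iSup₂ (f := fun t' (_ : 2 * r < t') => ENNReal.ofReal t' ^ (α - (n:ℝ)) *
            ∫⁻ z in ball x t', (‖f z‖₊ : ℝ≥0∞)) (2 * t) (by linarith)
  -- identification of the norm of f₁
  have hf1norm : luxNorm Φ volume Set.univ f₁ = luxNorm Φ volume B2 f := by
    unfold luxNorm luxNormE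
    congr 1
    ext lam
    simp only [Set.mem_setOf_eq, Measure.restrict_univ]
    have hint : ∫⁻ z, Φ.ext ((‖f₁ z‖₊ : ℝ≥0∞) / lam) =
        ∫⁻ z in B2, Φ.ext ((‖f z‖₊ : ℝ≥0∞) / lam) := by
      rw [← lintegral_indicator measurableSet_ball]
      refine lintegral_congr fun z => ?_
      by_cases hz : z ∈ B2
      · simp [hf₁, Set.indicator_of_mem hz, Set.indicator_of_mem (s := ball x (2 * r)) hz]
      · simp [hf₁, Set.indicator_of_notMem hz, Set.indicator_of_notMem (s := ball x (2 * r)) hz, Φ.ext_zero]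
    rw [hint]
  -- measure of the ball B
  have hB0 : 0 < volume (ball x r) := measure_ball_pos volume x hr
  have hBt : volume (ball x r) ≠ ⊤ := measure_ball_lt_top.ne
  -- comparison of the inverses
  have hinvcomp : (Ψ.inv ((volume (ball x r))⁻¹))⁻¹ ≤
      M * (Ψ.inv (ENNReal.ofReal r ^ (-(n:ℝ))))⁻¹ := by
    set s : ℝ≥0∞ := ENNReal.ofReal r ^ (-(n:ℝ)) with hs
    have hBinv : (volume (ball x r))⁻¹ = s * v⁻¹ := by
      rw [hvol x r hr.le, ENNReal.mul_inv (Or.inl (by positivity)) (Or.inl ENNReal.ofReal_ne_top)]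
      congr 1
      rw [← Real.rpow_natCast r n, ← ENNReal.ofReal_rpow_of_pos hr, ← ENNReal.rpow_neg]
    have hclaim : Ψ.inv s ≤ M * Ψ.inv (s * v⁻¹) := by
      rcases le_total v 1 with hv1 | hv1
      · have : s ≤ s * v⁻¹ := by
          conv_lhs => rw [← mul_one s]
          exact mul_le_mul_right (ENNReal.one_le_inv.mpr hv1) s
        calc Ψ.inv s ≤ Ψ.inv (s * v⁻¹) := Ψ.inv_mono this
        _ ≤ M * Ψ.inv (s * v⁻¹) := le_mul_of_one_le_left zero_le hM1
      · have hva : (1:ℝ≥0) ≤ v.toNNReal := by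
          rw [← ENNReal.one_le_coe_iff, ENNReal.coe_toNNReal hvt]
          exact hv1
        have hseq : (v.toNNReal : ℝ≥0∞) * (s * v⁻¹) = s := by
          rw [ENNReal.coe_toNNReal hvt, ← mul_assoc, mul_comm v s, mul_assoc,
            ENNReal.mul_inv_cancel hv0 hvt, mul_one]
        calc Ψ.inv s = Ψ.inv ((v.toNNReal : ℝ≥0∞) * (s * v⁻¹)) := by rw [hseq]
        _ ≤ (v.toNNReal : ℝ≥0∞) * Ψ.inv (s * v⁻¹) := Ψ.inv_mul_le _ hva _
        _ ≤ M * Ψ.inv (s * v⁻¹) := by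
            gcongr
            rw [ENNReal.coe_toNNReal hvt]
            exact le_max_right _ _
    rw [hBinv]
    calc (Ψ.inv (s * v⁻¹))⁻¹ = M * (M * Ψ.inv (s * v⁻¹))⁻¹ := by
          rw [ENNReal.mul_inv (Or.inl hM0) (Or.inl hMt), ← mul_assoc,
            ENNReal.mul_inv_cancel hM0 hMt, one_mul]
    _ ≤ M * (Ψ.inv s)⁻¹ := by
          gcongr
  -- putting everything together
  calc luxNormE Ψ volume (ball x r) (fracMaximal n α f)
      ≤ luxNormE Ψ volume (ball x r) (fun y => fracMaximal n α f₁ y + c₂ * K) := by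
        refine luxNormE_mono_fun Ψ volume measurableSet_ball fun y hy => ?_
        exact le_trans (hsplit y) (add_le_add le_rfl (hf2bound y hy))
  _ ≤ 4 * luxNormE Ψ volume (ball x r) (fracMaximal n α f₁) +
        4 * luxNormE Ψ volume (ball x r) (fun _ => c₂ * K) :=
        luxNormE_add_const_le Ψ volume (ball x r) _ _
  _ ≤ 4 * (ENNReal.ofReal A * luxNorm Φ volume B2 f) +
        4 * (2 * (c₂ * K) * (Ψ.inv ((volume (ball x r))⁻¹))⁻¹) := by
        gcongr
        · calc luxNormE Ψ volume (ball x r) (fracMaximal n α f₁)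
              ≤ luxNormE Ψ volume Set.univ (fracMaximal n α f₁) :=
                luxNormE_mono_set Ψ volume (Set.subset_univ _) _
          _ ≤ ENNReal.ofReal A * luxNorm Φ volume Set.univ f₁ := hbdd f₁
          _ = ENNReal.ofReal A * luxNorm Φ volume B2 f := by rw [hf1norm]
        · exact luxNormE_const_le Ψ volume (ball x r) hB0 hBt _
  _ ≤ ENNReal.ofReal (4 * A) * luxNorm Φ volume B2 f +
        (8 * c₂ * M) * ((Ψ.inv (ENNReal.ofReal r ^ (-(n:ℝ))))⁻¹ * K) := by
        refine add_le_add (le_of_eq ?_) ?_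
        · rw [ENNReal.ofReal_mul (by norm_num), ← mul_assoc]
          norm_num
        · calc 4 * (2 * (c₂ * K) * (Ψ.inv ((volume (ball x r))⁻¹))⁻¹)
              ≤ 4 * (2 * (c₂ * K) * (M * (Ψ.inv (ENNReal.ofReal r ^ (-(n:ℝ))))⁻¹)) := by
                gcongr
          _ = (8 * c₂ * M) * ((Ψ.inv (ENNReal.ofReal r ^ (-(n:ℝ))))⁻¹ * K) := by ring
  _ ≤ D * luxNorm Φ volume B2 f +
        D * ((Ψ.inv (ENNReal.ofReal r ^ (-(n:ℝ))))⁻¹ * K) := by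
        gcongr
        · exact le_max_left _ _
        · exact le_max_right _ _
  _ ≤ ENNReal.ofReal (D.toReal + 1) * luxNorm Φ volume B2 f +
        ENNReal.ofReal (D.toReal + 1) * ((Ψ.inv (ENNReal.ofReal r ^ (-(n:ℝ))))⁻¹ * K) := by
        gcongr <;> exact hCD
  _ = ENNReal.ofReal (D.toReal + 1) *
        (luxNorm Φ volume (ball x (2 * r)) f +
          (Ψ.inv (ENNReal.ofReal r ^ (-(n:ℝ))))⁻¹ *
            ⨆ (t : ℝ) (_ : 2 * r < t),
              ENNReal.ofReal t ^ (α - (n:ℝ)) *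
                ∫⁻ z in ball x t, (‖f z‖₊ : ℝ≥0∞)) := by
        rw [mul_add, ← hK, ← hB2]

end
end
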